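/- Let X be a Banach space and K, L ⊆ X* nonempty w*-compact sets. For every ε > 0, o_w(H^{K+L}_ε) ≤ o_w(H^K_{ε/2}) ⊕ o_w(H^L_{ε/2}), where ⊕ is the Hessenberg (natural) sum of ordinals. -/

import Mathlib

open NormedSpace

noncomputable def derivIter {α : Type*} (d : Set α → Set α) (K : Set α) : Ordinal → Set α :=
  fun ξ => Ordinal.limitRecOn ξ K (fun _ ih => d ih)
    (fun o _ ih => ⋂ ζ : Set.Iio o, ih ζ.1 ζ.2)

/-- The `D`-derivative of a set of finite sequences. -/
def derivD {Λ : Type*} (D : Set (Set Λ)) (H : Set (List Λ)) : Set (List Λ) :=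
  {t ∈ H | ∀ U ∈ D, ∃ x ∈ U, t ++ [x] ∈ H}

/-- The canonical basis of weak neighborhoods of `0` in `X`. -/
def weakBasis (X : Type*) [NormedAddCommGroup X] [NormedSpace ℝ X] : Set (Set X) :=
  {U | ∃ (F : Finset (StrongDual ℝ X)) (δ : ℝ), 0 < δ ∧ U = {x | ∀ f ∈ F, |f x| < δ}}

/-- The hereditary tree `H^K_ε` of finite sequences in the unit ball of `X` on which
some member of `K` is everywhere at least `ε`. -/
def HKtree {X : Type*} [NormedAddCommGroup X] [NormedSpace ℝ X]
    (K : Set (StrongDual ℝ X)) (ε : ℝ) : Set (List X) :=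
  {t | (∀ x ∈ t, ‖x‖ ≤ 1) ∧ ∃ f ∈ K, ∀ x ∈ t, ε ≤ f x}

/-- `o_D(H)`: least ordinal where the iterated `D`-derivative is empty (`0` if none). -/
noncomputable def ordD {Λ : Type*} (D : Set (Set Λ)) (H : Set (List Λ)) : Ordinal :=
  sInf {ξ | derivIter (derivD D) H ξ = ∅}

open scoped Pointwise

/-- Natural (Hessenberg) sum of ordinals, as formerly defined in Mathlib's
`Mathlib.SetTheory.Ordinal.NaturalOps` (removed since). -/
noncomputable def Ordinal.nadd.{u} : Ordinal.{u} → Ordinal.{u} → Ordinal.{u}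
  | a, b =>
    max (Ordinal.blsub.{u, u} a fun a' _ => Ordinal.nadd a' b)
      (Ordinal.blsub.{u, u} b fun b' _ => Ordinal.nadd a b')
termination_by a b => (a, b)
decreasing_by
  · exact Prod.Lex.left _ _ ‹_›
  · exact Prod.Lex.right _ ‹_›

theorem Ordinal.nadd_lt_nadd_left {b c : Ordinal} (h : b < c) (a : Ordinal) :
    Ordinal.nadd a b < Ordinal.nadd a c := by
  conv_rhs => rw [Ordinal.nadd]
  exact lt_max_of_lt_right (Ordinal.lt_blsub (fun c' _ => Ordinal.nadd a c') b h)

theorem Ordinal.nadd_lt_nadd_right {b c : Ordinal} (h : b < c) (a : Ordinal) :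
    Ordinal.nadd b a < Ordinal.nadd c a := by
  conv_rhs => rw [Ordinal.nadd]
  exact lt_max_of_lt_left (Ordinal.lt_blsub (fun b' _ => Ordinal.nadd b' a) b h)

theorem Ordinal.nadd_le_nadd_left {b c : Ordinal} (h : b ≤ c) (a : Ordinal) :
    Ordinal.nadd a b ≤ Ordinal.nadd a c := by
  rcases h.lt_or_eq with h | rfl
  · exact (Ordinal.nadd_lt_nadd_left h a).le
  · exact le_rfl

theorem Ordinal.nadd_le_nadd_right {b c : Ordinal} (h : b ≤ c) (a : Ordinal) :
    Ordinal.nadd b a ≤ Ordinal.nadd c a := by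
  rcases h.lt_or_eq with h | rfl
  · exact (Ordinal.nadd_lt_nadd_right h a).le
  · exact le_rfl

@[simp]
theorem Ordinal.nadd_zero (a : Ordinal) : Ordinal.nadd a 0 = a := by
  induction a using Ordinal.induction with
  | h a IH =>
    rw [Ordinal.nadd]
    have h1 : (Ordinal.blsub a fun a' _ => Ordinal.nadd a' 0) = Ordinal.blsub a fun a' _ => a' := by
      congr 1; funext a' h; exact IH a' h
    rw [h1, Ordinal.blsub_id, Ordinal.blsub_zero, max_eq_left (zero_le : (0 : Ordinal) ≤ a)]

theorem Ordinal.nadd_succ (a b : Ordinal) :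
    Ordinal.nadd a (Order.succ b) = Order.succ (Ordinal.nadd a b) := by
  induction a using Ordinal.induction with
  | h a IH =>
    refine le_antisymm ?_ (Order.succ_le_of_lt (Ordinal.nadd_lt_nadd_left (Order.lt_succ b) a))
    conv_lhs => rw [Ordinal.nadd]
    refine max_le ?_ ?_
    · rw [Ordinal.blsub_le_iff]
      intro a' ha'
      rw [IH a' ha']
      exact Order.succ_lt_succ_iff.mpr (Ordinal.nadd_lt_nadd_right ha' b)
    · rw [Ordinal.blsub_le_iff]
      intro c' hc'
      exact Order.lt_succ_iff.mpr (Ordinal.nadd_le_nadd_left (Order.lt_succ_iff.mp hc') a)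

/-! ### Auxiliary development -/

section DerivIterLemmas

variable {α : Type*} (d : Set α → Set α) (K : Set α)

theorem derivIter_zero : derivIter d K 0 = K :=
  Ordinal.limitRecOn_zero _ _ _

theorem derivIter_succ (ξ : Ordinal) :
    derivIter d K (Order.succ ξ) = d (derivIter d K ξ) := by
  rw [← Ordinal.add_one_eq_succ]; exact Ordinal.limitRecOn_add_one _ _ _ _

theorem derivIter_limit {ξ : Ordinal} (h : Order.IsSuccLimit ξ) :
    derivIter d K ξ = ⋂ ζ : Set.Iio ξ, derivIter d K ζ.1 :=
  Ordinal.limitRecOn_limit _ _ _ _ h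

variable {d K}

theorem derivIter_anti (hd : ∀ H, d H ⊆ H) :
    ∀ ξ ζ : Ordinal, ζ ≤ ξ → derivIter d K ξ ⊆ derivIter d K ζ := by
  intro ξ
  induction ξ using Ordinal.limitRecOn with
  | zero =>
    intro ζ hζ
    rw [nonpos_iff_eq_zero.mp hζ]
  | add_one ξ ih =>
    rw [Ordinal.add_one_eq_succ]
    intro ζ hζ
    rcases eq_or_lt_of_le hζ with rfl | h
    · exact subset_rfl
    · have hζξ : ζ ≤ ξ := Order.lt_succ_iff.mp h
      rw [derivIter_succ]
      exact (hd _).trans (ih ζ hζξ)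
  | limit ξ hξ ih =>
    intro ζ hζ
    rcases eq_or_lt_of_le hζ with rfl | h
    · exact subset_rfl
    · rw [derivIter_limit d K hξ]
      exact Set.iInter_subset (fun ζ' : Set.Iio ξ => derivIter d K ζ'.1) ⟨ζ, h⟩

theorem derivIter_mono (hd : Monotone d) {K' : Set α} (hKK' : K ⊆ K') :
    ∀ ξ : Ordinal, derivIter d K ξ ⊆ derivIter d K' ξ := by
  intro ξ
  induction ξ using Ordinal.limitRecOn with
  | zero => rw [derivIter_zero, derivIter_zero]; exact hKK'
  | add_one ξ ih => rw [Ordinal.add_one_eq_succ, derivIter_succ, derivIter_succ]; exact hd ih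
  | limit ξ hξ ih =>
    rw [derivIter_limit d K hξ, derivIter_limit d K' hξ]
    exact Set.iInter_mono fun ζ => ih ζ.1 ζ.2

end DerivIterLemmas

section DerivD

variable {Λ : Type*} {D : Set (Set Λ)} {H H' : Set (List Λ)}

theorem derivD_subset : derivD D H ⊆ H := fun _ ht => ht.1

theorem derivD_mono (h : H ⊆ H') : derivD D H ⊆ derivD D H' := by
  rintro t ⟨h1, h2⟩
  refine ⟨h h1, fun U hU => ?_⟩
  obtain ⟨x, hx, hm⟩ := h2 U hU
  exact ⟨x, hx, h hm⟩

theorem derivD_monotone (D : Set (Set Λ)) : Monotone (derivD D) :=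
  fun _ _ h => derivD_mono h

/-- A set of lists is hereditary if it is closed under sublists. -/
def Hered (H : Set (List Λ)) : Prop :=
  ∀ ⦃s t : List Λ⦄, s.Sublist t → t ∈ H → s ∈ H

theorem hered_derivD (hH : Hered H) : Hered (derivD D H) := by
  rintro s t hst ⟨h1, h2⟩
  refine ⟨hH hst h1, fun U hU => ?_⟩
  obtain ⟨x, hx, hm⟩ := h2 U hU
  exact ⟨x, hx, hH (hst.append (List.Sublist.refl [x])) hm⟩

theorem hered_derivIter (hH : Hered H) (ξ : Ordinal) :
    Hered (derivIter (derivD D) H ξ) := by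
  induction ξ using Ordinal.limitRecOn with
  | zero => rwa [derivIter_zero]
  | add_one ξ ih => rw [Ordinal.add_one_eq_succ, derivIter_succ]; exact hered_derivD ih
  | limit ξ hξ ih =>
    rw [derivIter_limit _ _ hξ]
    intro s t hst ht
    rw [Set.mem_iInter] at ht ⊢
    exact fun ζ => ih ζ.1 ζ.2 hst (ht ζ)

end DerivD

section SplitsDef

variable {Λ : Type*}

/-- `Splits t s u` means `t` can be split into two complementary subsequences `s` and `u`. -/
inductive Splits : List Λ → List Λ → List Λ → Prop
  | nil : Splits [] [] []
  | left {t s u : List Λ} (x : Λ) : Splits t s u → Splits (t ++ [x]) (s ++ [x]) u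
  | right {t s u : List Λ} (x : Λ) : Splits t s u → Splits (t ++ [x]) s (u ++ [x])

theorem Splits.sublist_left {t s u : List Λ} (h : Splits t s u) : s.Sublist t := by
  induction h with
  | nil => exact List.Sublist.refl _
  | left x _ ih => exact ih.append (List.Sublist.refl [x])
  | right x _ ih => exact ih.trans (List.sublist_append_left _ _)

theorem Splits.sublist_right {t s u : List Λ} (h : Splits t s u) : u.Sublist t := by
  induction h with
  | nil => exact List.Sublist.refl _
  | left x _ ih => exact ih.trans (List.sublist_append_left _ _)
  | right x _ ih => exact ih.append (List.Sublist.refl [x])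

theorem splits_nil_inv {s u : List Λ} (h : Splits ([] : List Λ) s u) :
    s = [] ∧ u = [] := by
  generalize hw : ([] : List Λ) = w at h
  cases h with
  | nil => exact ⟨rfl, rfl⟩
  | left y hs => exact absurd hw.symm (by simp)
  | right y hs => exact absurd hw.symm (by simp)

theorem splits_concat_inv {t s u : List Λ} {x : Λ} (h : Splits (t ++ [x]) s u) :
    (∃ s', s = s' ++ [x] ∧ Splits t s' u) ∨ ∃ u', u = u' ++ [x] ∧ Splits t s u' := by
  generalize hw : t ++ [x] = w at h
  cases h with
  | nil => simp at hw
  | @left t₁ s₁ u₁ y hs =>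
    obtain ⟨ht, hx⟩ := List.append_inj' hw rfl
    have hx' : x = y := by simpa using hx
    subst ht; subst hx'
    exact Or.inl ⟨s₁, rfl, hs⟩
  | @right t₁ s₁ u₁ y hs =>
    obtain ⟨ht, hx⟩ := List.append_inj' hw rfl
    have hx' : x = y := by simpa using hx
    subst ht; subst hx'
    exact Or.inr ⟨u₁, rfl, hs⟩

theorem splits_finite (t : List Λ) :
    {p : List Λ × List Λ | Splits t p.1 p.2}.Finite := by
  induction t using List.reverseRecOn with
  | nil =>
    apply Set.Finite.subset (Set.finite_singleton (([] : List Λ), ([] : List Λ)))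
    rintro ⟨s, u⟩ hp
    obtain ⟨rfl, rfl⟩ := splits_nil_inv hp
    rfl
  | append_singleton t x ih =>
    apply Set.Finite.subset
      ((ih.image fun p => (p.1 ++ [x], p.2)).union (ih.image fun p => (p.1, p.2 ++ [x])))
    rintro ⟨s, u⟩ hp
    rcases splits_concat_inv hp with ⟨s', rfl, h⟩ | ⟨u', rfl, h⟩
    · exact Or.inl ⟨(s', u), h, rfl⟩
    · exact Or.inr ⟨(s, u'), h, rfl⟩

end SplitsDef

section Nu

variable {Λ : Type*} (D : Set (Set Λ)) (H : Set (List Λ))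

universe uOrd

/-- The `D`-rank of a finite sequence `s` relative to `H`:
the least ordinal `ξ` such that `s` is not in the `ξ`-th derived tree. -/
noncomputable def nuD (s : List Λ) : Ordinal.{uOrd} :=
  sInf {ξ | s ∉ derivIter (derivD D) H ξ}

variable {D H} {α : Ordinal.{uOrd}} (hα : derivIter (derivD D) H α = ∅)

include hα

theorem nuD_nonmem (s : List Λ) :
    s ∉ derivIter (derivD D) H (nuD D H s : Ordinal.{uOrd}) := by
  have hne : Set.Nonempty {ξ : Ordinal.{uOrd} | s ∉ derivIter (derivD D) H ξ} :=
    ⟨α, show s ∉ derivIter (derivD D) H α by rw [hα]; exact Set.notMem_empty s⟩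
  exact csInf_mem hne

theorem nuD_le (s : List Λ) : (nuD D H s : Ordinal.{uOrd}) ≤ α :=
  csInf_le' (show α ∈ {ξ : Ordinal.{uOrd} | s ∉ derivIter (derivD D) H ξ} by
    rw [Set.mem_setOf_eq, hα]; exact Set.notMem_empty s)

theorem mem_derivIter_iff_lt_nuD {s : List Λ} {ξ : Ordinal.{uOrd}} :
    s ∈ derivIter (derivD D) H ξ ↔ ξ < nuD D H s := by
  constructor
  · intro hs
    by_contra h
    exact nuD_nonmem hα s
      (derivIter_anti (fun H' => derivD_subset) ξ _ (not_lt.mp h) hs)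
  · intro h
    have := notMem_of_lt_csInf' h
    rw [Set.mem_setOf_eq, not_not] at this
    exact this

theorem nuD_pos {s : List Λ} (hs : s ∈ H) : 0 < (nuD D H s : Ordinal.{uOrd}) :=
  (mem_derivIter_iff_lt_nuD hα).mp (by rwa [derivIter_zero])

theorem nuD_not_isLimit (s : List Λ) : ¬Order.IsSuccLimit (nuD D H s : Ordinal.{uOrd}) := by
  intro h
  apply nuD_nonmem hα s
  rw [derivIter_limit _ _ h, Set.mem_iInter]
  rintro ⟨ζ, hζ⟩
  exact (mem_derivIter_iff_lt_nuD hα).mpr hζ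

theorem nuD_mono_sublist (hH : Hered H) {s s' : List Λ} (hss' : s.Sublist s') :
    (nuD D H s' : Ordinal.{uOrd}) ≤ nuD D H s := by
  refine le_of_forall_lt fun ξ hξ => ?_
  exact (mem_derivIter_iff_lt_nuD hα).mp
    (hered_derivIter hH _ hss' ((mem_derivIter_iff_lt_nuD hα).mpr hξ))

theorem nuD_bump {s : List Λ} (hs : 0 < (nuD D H s : Ordinal.{uOrd})) :
    ∃ U ∈ D, ∀ x ∈ U, (nuD D H (s ++ [x]) : Ordinal.{uOrd}) < nuD D H s := by
  rcases Ordinal.zero_or_succ_or_isSuccLimit (nuD D H s) with h0 | ⟨ρ, hρ⟩ | hlim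
  · rw [h0] at hs; exact absurd hs (lt_irrefl _)
  · have hρlt : ρ < nuD D H s := by rw [← hρ]; exact Order.lt_succ ρ
    have hmem : s ∈ derivIter (derivD D) H ρ :=
      (mem_derivIter_iff_lt_nuD hα).mpr hρlt
    have hnot : s ∉ derivD D (derivIter (derivD D) H ρ) := by
      rw [← derivIter_succ (derivD D) H ρ, hρ]
      exact nuD_nonmem hα s
    rw [derivD, Set.mem_setOf_eq] at hnot
    push_neg at hnot
    obtain ⟨U, hU, hUn⟩ := hnot hmem
    refine ⟨U, hU, fun x hx => ?_⟩
    have h2 : (nuD D H (s ++ [x]) : Ordinal.{uOrd}) ≤ ρ :=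
      csInf_le' (show ρ ∈ {ξ : Ordinal.{uOrd} | s ++ [x] ∉ derivIter (derivD D) H ξ}
        from hUn x hx)
    exact lt_of_le_of_lt h2 hρlt
  · exact absurd hlim (nuD_not_isLimit hα s)

end Nu

theorem nadd_not_isLimit {a b : Ordinal} (ha : ¬Order.IsSuccLimit a) (hb : ¬Order.IsSuccLimit b) :
    ¬Order.IsSuccLimit (Ordinal.nadd a b) := by
  rcases Ordinal.zero_or_succ_or_isSuccLimit b with rfl | ⟨c, rfl⟩ | h
  · rwa [Ordinal.nadd_zero]
  · rw [Ordinal.nadd_succ]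
    exact fun h => absurd (h.succ_lt (Order.lt_succ _)) (lt_irrefl _)
  · exact absurd h hb

section MainInduction

variable {Λ : Type*} {D : Set (Set Λ)}

/-- The key combinatorial lemma: any element of the `γ`-th derived tree of the shuffle of
two hereditary trees `I` and `J` admits a split whose `nuD`-ranks have Hessenberg sum
exceeding `γ`. -/
theorem main_ind
    (hD : ∀ S : Set (Set Λ), S.Finite → S ⊆ D → ∃ U ∈ D, ∀ V ∈ S, U ⊆ V)
    {I J : Set (List Λ)} (hI : Hered I) (hJ : Hered J)
    {α β : Ordinal.{uOrd}} (hα : derivIter (derivD D) I α = ∅)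
    (hβ : derivIter (derivD D) J β = ∅) (γ : Ordinal.{uOrd}) :
    ∀ t ∈ derivIter (derivD D) {t | ∃ s u, Splits t s u ∧ s ∈ I ∧ u ∈ J} γ,
      ∃ s u, Splits t s u ∧ s ∈ I ∧ u ∈ J ∧
        γ < Ordinal.nadd (nuD D I s) (nuD D J u) := by
  induction γ using Ordinal.limitRecOn with
  | zero =>
    intro t ht
    rw [derivIter_zero] at ht
    obtain ⟨s, u, hsp, hs, hu⟩ := ht
    refine ⟨s, u, hsp, hs, hu, ?_⟩
    exact lt_of_lt_of_le (nuD_pos hα hs)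
      (by simpa using Ordinal.nadd_le_nadd_left (zero_le : (0 : Ordinal) ≤ nuD D J u) (nuD D I s))
  | add_one γ ih =>
    rw [Ordinal.add_one_eq_succ]
    intro t ht
    rw [derivIter_succ] at ht
    obtain ⟨ht1, ht2⟩ := ht
    have hSigfin : Set.Finite {p : List Λ × List Λ | Splits t p.1 p.2 ∧ p.1 ∈ I ∧ p.2 ∈ J} :=
      (splits_finite t).subset fun p hp => hp.1
    have hchI : ∀ p ∈ {p : List Λ × List Λ | Splits t p.1 p.2 ∧ p.1 ∈ I ∧ p.2 ∈ J}, ∃ U, U ∈ D ∧ ∀ x ∈ U, nuD D I (p.1 ++ [x]) < nuD D I p.1 := by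
      intro p hp
      obtain ⟨U, hU, hb⟩ := nuD_bump hα (nuD_pos hα hp.2.1)
      exact ⟨U, hU, hb⟩
    have hchJ : ∀ p ∈ {p : List Λ × List Λ | Splits t p.1 p.2 ∧ p.1 ∈ I ∧ p.2 ∈ J}, ∃ U, U ∈ D ∧ ∀ x ∈ U, nuD D J (p.2 ++ [x]) < nuD D J p.2 := by
      intro p hp
      obtain ⟨U, hU, hb⟩ := nuD_bump hβ (nuD_pos hβ hp.2.2)
      exact ⟨U, hU, hb⟩
    choose! UI hUI hbI using hchI
    choose! UJ hUJ hbJ using hchJ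
    obtain ⟨U, hUD, hUsub⟩ := hD
      ((UI '' {p : List Λ × List Λ | Splits t p.1 p.2 ∧ p.1 ∈ I ∧ p.2 ∈ J}) ∪
        (UJ '' {p : List Λ × List Λ | Splits t p.1 p.2 ∧ p.1 ∈ I ∧ p.2 ∈ J}))
      ((hSigfin.image _).union (hSigfin.image _))
      (by rintro V (⟨p, hp, rfl⟩ | ⟨p, hp, rfl⟩)
          exacts [hUI p hp, hUJ p hp])
    obtain ⟨x, hxU, hx⟩ := ht2 U hUD
    obtain ⟨s', u', hsp', hs', hu', hlt⟩ := ih (t ++ [x]) hx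
    rcases splits_concat_inv hsp' with ⟨s, rfl, hsp⟩ | ⟨u, rfl, hsp⟩
    · have hsI : s ∈ I := hI (List.sublist_append_left s [x]) hs'
      have hpSig : (s, u') ∈ {p : List Λ × List Λ | Splits t p.1 p.2 ∧ p.1 ∈ I ∧ p.2 ∈ J} :=
        ⟨hsp, hsI, hu'⟩
      have hxUI : x ∈ UI (s, u') := hUsub _ (Or.inl ⟨_, hpSig, rfl⟩) hxU
      have hlt2 : (nuD D I (s ++ [x]) : Ordinal.{uOrd}) < nuD D I s := hbI _ hpSig x hxUI
      refine ⟨s, u', hsp, hsI, hu', ?_⟩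
      exact lt_of_le_of_lt (Order.succ_le_of_lt hlt)
        (Ordinal.nadd_lt_nadd_right hlt2 _)
    · have huJ : u ∈ J := hJ (List.sublist_append_left u [x]) hu'
      have hpSig : (s', u) ∈ {p : List Λ × List Λ | Splits t p.1 p.2 ∧ p.1 ∈ I ∧ p.2 ∈ J} :=
        ⟨hsp, hs', huJ⟩
      have hxUJ : x ∈ UJ (s', u) := hUsub _ (Or.inr ⟨_, hpSig, rfl⟩) hxU
      have hlt2 : (nuD D J (u ++ [x]) : Ordinal.{uOrd}) < nuD D J u := hbJ _ hpSig x hxUJ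
      refine ⟨s', u, hsp, hs', huJ, ?_⟩
      exact lt_of_le_of_lt (Order.succ_le_of_lt hlt)
        (Ordinal.nadd_lt_nadd_left hlt2 _)
  | limit γ hγ ih =>
    intro t ht
    rw [derivIter_limit _ _ hγ, Set.mem_iInter] at ht
    have hSigfin : Set.Finite {p : List Λ × List Λ | Splits t p.1 p.2 ∧ p.1 ∈ I ∧ p.2 ∈ J} :=
      (splits_finite t).subset fun p hp => hp.1
    have hSigne : Set.Nonempty {p : List Λ × List Λ | Splits t p.1 p.2 ∧ p.1 ∈ I ∧ p.2 ∈ J} := by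
      obtain ⟨s, u, hsp, hs, hu, _⟩ := ih 0 hγ.pos t (ht ⟨0, hγ.pos⟩)
      exact ⟨(s, u), hsp, hs, hu⟩
    obtain ⟨p₀, hp₀, hmax⟩ := Set.exists_max_image
      {p : List Λ × List Λ | Splits t p.1 p.2 ∧ p.1 ∈ I ∧ p.2 ∈ J}
      (fun p => Ordinal.nadd (nuD D I p.1) (nuD D J p.2)) hSigfin hSigne
    have hub : γ ≤ Ordinal.nadd (nuD D I p₀.1) (nuD D J p₀.2) := by
      by_contra h
      push_neg at h
      obtain ⟨s, u, hsp, hs, hu, hlt⟩ := ih _ h t (ht ⟨_, h⟩)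
      exact absurd (lt_of_lt_of_le hlt (hmax (s, u) ⟨hsp, hs, hu⟩)) (lt_irrefl _)
    have hne : γ ≠ Ordinal.nadd (nuD D I p₀.1) (nuD D J p₀.2) := by
      intro h
      have hγ' := hγ
      rw [h] at hγ'
      exact nadd_not_isLimit (nuD_not_isLimit hα p₀.1) (nuD_not_isLimit hβ p₀.2) hγ'
    exact ⟨p₀.1, p₀.2, hp₀.1, hp₀.2.1, hp₀.2.2, lt_of_le_of_ne hub hne⟩

end MainInduction

section WeakBasisDirected

variable (X : Type*) [NormedAddCommGroup X] [NormedSpace ℝ X]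

theorem weakBasis_directed :
    ∀ S : Set (Set X), S.Finite → S ⊆ weakBasis X →
      ∃ U ∈ weakBasis X, ∀ V ∈ S, U ⊆ V := by
  intro S hS
  classical
  refine Set.Finite.induction_on
    (motive := fun S _ => S ⊆ weakBasis X → ∃ U ∈ weakBasis X, ∀ V ∈ S, U ⊆ V) S hS
    (fun _ => ⟨Set.univ, ⟨∅, 1, one_pos, by ext x; simp⟩, by simp⟩) @?_
  intro a s ha hfin ih hsub
  obtain ⟨U, hU, hUsub⟩ := ih ((Set.subset_insert a s).trans hsub)
  obtain ⟨F₁, δ₁, hδ₁, rfl⟩ := hsub (Set.mem_insert a s)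
  obtain ⟨F₂, δ₂, hδ₂, rfl⟩ := hU
  refine ⟨{x | ∀ f ∈ F₁ ∪ F₂, |f x| < min δ₁ δ₂},
    ⟨F₁ ∪ F₂, min δ₁ δ₂, lt_min hδ₁ hδ₂, rfl⟩, ?_⟩
  rintro V (rfl | hV)
  · intro x hx f hf
    exact lt_of_lt_of_le (hx f (Finset.mem_union_left _ hf)) (min_le_left _ _)
  · refine Set.Subset.trans ?_ (hUsub V hV)
    intro x hx f hf
    exact lt_of_lt_of_le (hx f (Finset.mem_union_right _ hf)) (min_le_right _ _)

theorem HKtree_hered (K : Set (StrongDual ℝ X)) (ε : ℝ) : Hered (HKtree K ε) := by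
  rintro s t hst ⟨hnorm, f, hfK, hft⟩
  exact ⟨fun x hx => hnorm x (hst.subset hx), f, hfK,
    fun x hx => hft x (hst.subset hx)⟩

theorem exists_split_aux (g h : StrongDual ℝ X) (ε : ℝ) :
    ∀ t : List X, (∀ x ∈ t, ε ≤ g x + h x) →
      ∃ s u, Splits t s u ∧ (∀ x ∈ s, ε / 2 ≤ g x) ∧ ∀ x ∈ u, ε / 2 ≤ h x := by
  intro t
  induction t using List.reverseRecOn with
  | nil => exact fun _ => ⟨[], [], Splits.nil, by simp, by simp⟩
  | append_singleton t x ih =>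
    intro hle
    obtain ⟨s, u, hsp, hgs, hhu⟩ := ih fun y hy => hle y (by simp [hy])
    by_cases hgx : ε / 2 ≤ g x
    · refine ⟨s ++ [x], u, hsp.left x, ?_, hhu⟩
      intro y hy
      rcases List.mem_append.mp hy with hy | hy
      · exact hgs y hy
      · rw [List.mem_singleton.mp hy]; exact hgx
    · refine ⟨s, u ++ [x], hsp.right x, hgs, ?_⟩
      intro y hy
      rcases List.mem_append.mp hy with hy | hy
      · exact hhu y hy
      · rw [List.mem_singleton.mp hy]
        have h1 : ε ≤ g x + h x := hle x (by simp)
        push_neg at hgx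
        linarith
    
theorem HKtree_add_subset_shuffle {K L : Set (StrongDual ℝ X)} {ε : ℝ} :
    HKtree (K + L) ε ⊆
      {t | ∃ s u, Splits t s u ∧ s ∈ HKtree K (ε / 2) ∧ u ∈ HKtree L (ε / 2)} := by
  rintro t ⟨hnorm, f, hfKL, hft⟩
  rw [Set.mem_add] at hfKL
  obtain ⟨g, hg, h, hh, rfl⟩ := hfKL
  have hle : ∀ x ∈ t, ε ≤ g x + h x := by
    intro x hx
    have := hft x hx
    rwa [ContinuousLinearMap.add_apply] at this
  obtain ⟨s, u, hsp, hgs, hhu⟩ := exists_split_aux X g h ε t hle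
  refine ⟨s, u, hsp, ⟨fun x hx => hnorm x (hsp.sublist_left.subset hx), g, hg, hgs⟩,
    ⟨fun x hx => hnorm x (hsp.sublist_right.subset hx), h, hh, hhu⟩⟩

end WeakBasisDirected

/-- `o_w(H^{K+L}_ε) ≤ o_w(H^K_{ε/2}) ⊕ o_w(H^L_{ε/2})` where `⊕` is the Hessenberg sum:
if the weak derivative of `H^K_{ε/2}` is empty at `α` and that of `H^L_{ε/2}` is empty
at `β`, then the weak derivative of `H^{K+L}_ε` is empty at `α ⊕ β`. -/
theorem ordW_minkowski_nadd {X : Type*} [NormedAddCommGroup X] [NormedSpace ℝ X]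
    [CompleteSpace X] (K L : Set (StrongDual ℝ X)) (hK : K.Nonempty) (hL : L.Nonempty)
    (hKc : IsCompact ((fun f => StrongDual.toWeakDual f) '' K))
    (hLc : IsCompact ((fun f => StrongDual.toWeakDual f) '' L))
    (ε : ℝ) (hε : 0 < ε) (α β : Ordinal)
    (hα : derivIter (derivD (weakBasis X)) (HKtree K (ε / 2)) α = ∅)
    (hβ : derivIter (derivD (weakBasis X)) (HKtree L (ε / 2)) β = ∅) :
    derivIter (derivD (weakBasis X)) (HKtree (K + L) ε) (Ordinal.nadd α β) = ∅ := by
  rw [Set.eq_empty_iff_forall_notMem]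
  intro t ht
  have ht' := derivIter_mono (derivD_monotone (weakBasis X))
    (HKtree_add_subset_shuffle X) (Ordinal.nadd α β) ht
  obtain ⟨s, u, _, _, _, hlt⟩ := main_ind (weakBasis_directed X)
    (HKtree_hered X K (ε / 2)) (HKtree_hered X L (ε / 2)) hα hβ
    (Ordinal.nadd α β) t ht'
  have h1 : nuD (weakBasis X) (HKtree K (ε / 2)) s ≤ α := nuD_le hα s
  have h2 : nuD (weakBasis X) (HKtree L (ε / 2)) u ≤ β := nuD_le hβ u
  exact absurd hlt (not_lt.mpr
    ((Ordinal.nadd_le_nadd_right h1 _).trans (Ordinal.nadd_le_nadd_left h2 _)))
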